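/- Let (W,S) be a right-angled Coxeter system, let w ∈ W with reduced representation w = s₁⋯s_l (each s_i ∈ S, ℓ(w) = l), and let t, t' ∈ S. If the representation t s₁⋯s_l of tw is reduced (i.e., ℓ(tw) = l + 1) and t w t' = w, then t = t' and t s_i = s_i t for each i ∈ {1, …, l}. -/

import Mathlib

open List

set_option linter.unusedSectionVars false
set_option linter.unusedVariables false
set_option maxHeartbeats 1600000

namespace RACProof

variable {B : Type*} {W : Type*} [DecidableEq B] [DecidableEq W] [Group W]
  {M : CoxeterMatrix B} (cs : CoxeterSystem M W)

lemma ztwo_mul_self (g : Multiplicative (ZMod 2)) : g * g = 1 := by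
  have h : Multiplicative.toAdd g + Multiplicative.toAdd g = 0 := by
    have : ∀ x : ZMod 2, x + x = 0 := by decide
    exact this _
  calc g * g = Multiplicative.ofAdd (Multiplicative.toAdd g + Multiplicative.toAdd g) := by
        rw [ofAdd_add, ofAdd_toAdd]
    _ = 1 := by rw [h, ofAdd_zero]

def parityF (c : B) : B → Multiplicative (ZMod 2) :=
  fun i => Multiplicative.ofAdd (if i = c then 1 else 0)

lemma parityLiftable (hra : ∀ s t : B, s ≠ t → M s t = 2 ∨ M s t = 0) (c : B) :
    M.IsLiftable (parityF c) := by
  intro i j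
  rcases eq_or_ne i j with rfl | hij
  · rw [M.diagonal, pow_one]; exact ztwo_mul_self _
  · rcases hra i j hij with h2 | h0
    · rw [h2, pow_two]; exact ztwo_mul_self _
    · rw [h0, pow_zero]

noncomputable def parityHom (hra : ∀ s t : B, s ≠ t → M s t = 2 ∨ M s t = 0) (c : B) :
    W →* Multiplicative (ZMod 2) :=
  cs.lift ⟨parityF c, parityLiftable hra c⟩

lemma parityHom_simple (hra : ∀ s t : B, s ≠ t → M s t = 2 ∨ M s t = 0) (c i : B) :
    parityHom cs hra c (cs.simple i) = Multiplicative.ofAdd (if i = c then 1 else 0) :=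
  cs.lift_apply_simple _ i

lemma simple_ne (hra : ∀ s t : B, s ≠ t → M s t = 2 ∨ M s t = 0) {i j : B} (hij : i ≠ j) :
    cs.simple i ≠ cs.simple j := by
  intro e
  have h1 := congrArg (parityHom cs hra i) e
  rw [parityHom_simple, parityHom_simple, if_pos rfl, if_neg (Ne.symm hij)] at h1
  exact absurd h1 (by decide)

lemma eq_of_conj_eq (hra : ∀ s t : B, s ≠ t → M s t = 2 ∨ M s t = 0) {t t' : B} {w : W}
    (h : cs.simple t * w * cs.simple t' = w) : t = t' := by
  by_contra hne
  have h1 := congrArg (parityHom cs hra t) h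
  rw [map_mul, map_mul] at h1
  rw [mul_comm (parityHom cs hra t (cs.simple t)) (parityHom cs hra t w), mul_assoc] at h1
  nth_rewrite 2 [← mul_one (parityHom cs hra t w)] at h1
  have h2 := mul_left_cancel h1
  rw [parityHom_simple, parityHom_simple, if_pos rfl, if_neg (Ne.symm hne)] at h2
  exact absurd h2 (by decide)

def etaFun (i : B) : W × ℤˣ → W × ℤˣ :=
  fun p => (cs.simple i * p.1 * cs.simple i, if p.1 = cs.simple i then -p.2 else p.2)

lemma etaFun_involutive (i : B) : Function.Involutive (etaFun cs i) := by
  rintro ⟨w, ε⟩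
  by_cases hw : w = cs.simple i
  · subst hw
    simp [etaFun, cs.simple_mul_simple_cancel_left, cs.simple_mul_simple_self]
  · have hred : cs.simple i * (cs.simple i * w * cs.simple i) * cs.simple i = w := by
      simp [mul_assoc, cs.simple_mul_simple_cancel_left, cs.simple_mul_simple_self]
    have hcond : cs.simple i * w * cs.simple i ≠ cs.simple i := by
      intro hx
      apply hw
      have h2 := congrArg (fun z => cs.simple i * z * cs.simple i) hx
      rw [hred] at h2
      rw [h2]
      simp [mul_assoc, cs.simple_mul_simple_cancel_left, cs.simple_mul_simple_self]
    simp only [etaFun, if_neg hw, if_neg hcond, hred]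

def eta (i : B) : Equiv.Perm (W × ℤˣ) :=
  Function.Involutive.toPerm _ (etaFun_involutive cs i)

lemma eta_apply (i : B) (w : W) (ε : ℤˣ) :
    eta cs i (w, ε) = (cs.simple i * w * cs.simple i, if w = cs.simple i then -ε else ε) := rfl

lemma eta_mul_self (i : B) : eta cs i * eta cs i = 1 := by
  refine Equiv.ext fun p => ?_
  rw [Equiv.Perm.mul_apply]
  exact (etaFun_involutive cs i p).trans rfl

lemma eta_liftable (hra : ∀ s t : B, s ≠ t → M s t = 2 ∨ M s t = 0) :
    M.IsLiftable (fun i => eta cs i) := by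
  intro i j
  rcases eq_or_ne i j with rfl | hij
  · rw [M.diagonal, pow_one]; exact eta_mul_self cs i
  · rcases hra i j hij with h2 | h0
    swap
    · rw [h0, pow_zero]
    rw [h2, pow_two]
    have hsij : cs.simple i ≠ cs.simple j := simple_ne cs hra hij
    have hp : (cs.simple i * cs.simple j) * (cs.simple i * cs.simple j) = 1 := by
      have hpow := cs.simple_mul_simple_pow i j
      rw [h2, pow_two] at hpow
      exact hpow
    have hc : cs.simple i * cs.simple j = cs.simple j * cs.simple i := by
      have h3 : cs.simple i * cs.simple j = (cs.simple i * cs.simple j)⁻¹ :=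
        eq_inv_of_mul_eq_one_left hp
      rw [h3, mul_inv_rev, cs.inv_simple, cs.inv_simple]
    have hjij : cs.simple j * cs.simple i * cs.simple j = cs.simple i := by
      rw [mul_assoc, hc, cs.simple_mul_simple_cancel_left]
    have hiji : cs.simple i * cs.simple j * cs.simple i = cs.simple j := by
      rw [mul_assoc, ← hc, cs.simple_mul_simple_cancel_left]
    have eii : cs.simple i * cs.simple i * cs.simple i = cs.simple i := by
      rw [cs.simple_mul_simple_self, one_mul]
    have ejj : cs.simple j * cs.simple j * cs.simple j = cs.simple j := by
      rw [cs.simple_mul_simple_self, one_mul]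
    refine Equiv.ext fun p => ?_
    rcases p with ⟨w, ε⟩
    simp only [Equiv.Perm.mul_apply, Equiv.Perm.one_apply, eta_apply]
    rcases eq_or_ne w (cs.simple j) with rfl | h1
    · simp only [ejj, hiji]
      simp [Ne.symm hsij]
    · rcases eq_or_ne w (cs.simple i) with rfl | h2
      · simp only [hjij, eii]
        simp [hsij, Ne.symm hsij]
      · have hC2 : cs.simple j * w * cs.simple j ≠ cs.simple i := fun e =>
          h2 (mul_left_cancel (mul_right_cancel (e.trans hjij.symm)))
        have hC3 : cs.simple i * (cs.simple j * w * cs.simple j) * cs.simple i ≠ cs.simple j :=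
          fun e => h1 (mul_left_cancel (mul_right_cancel
            ((mul_left_cancel (mul_right_cancel (e.trans hiji.symm))).trans ejj.symm)))
        have hC4 : cs.simple j * (cs.simple i * (cs.simple j * w * cs.simple j) * cs.simple i) *
            cs.simple j ≠ cs.simple i := fun e =>
          hC2 ((mul_left_cancel (mul_right_cancel (e.trans hjij.symm))).trans eii.symm |>
            mul_right_cancel |> mul_left_cancel)
        rw [if_neg h1, if_neg hC2, if_neg hC3, if_neg hC4]
        have hp' : cs.simple i * cs.simple j * cs.simple i * cs.simple j = 1 := by
          rw [mul_assoc (cs.simple i * cs.simple j)]; exact hp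
        have h4 : cs.simple j * (cs.simple i * (cs.simple j * cs.simple i)) = 1 := by
          rw [← mul_assoc, ← hc]
          exact hp
        have h5 : ∀ z : W, cs.simple i * (cs.simple j * (cs.simple i * (cs.simple j * z))) = z := by
          intro z
          rw [← mul_assoc, ← mul_assoc, ← mul_assoc, hp', one_mul]
        simp only [Prod.mk.injEq]
        refine ⟨?_, trivial⟩
        simp only [mul_assoc]
        rw [h5, h4, mul_one]

section Exchange

variable (hra : ∀ s t : B, s ≠ t → M s t = 2 ∨ M s t = 0)

noncomputable def titsHom (cs : CoxeterSystem M W)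
    (hra : ∀ s t : B, s ≠ t → M s t = 2 ∨ M s t = 0) : W →* Equiv.Perm (W × ℤˣ) :=
  cs.lift ⟨fun i => eta cs i, eta_liftable cs hra⟩

include hra in
lemma titsHom_simple (i : B) : titsHom cs hra (cs.simple i) = eta cs i :=
  cs.lift_apply_simple _ i

/-- sign of an element in a list -/
def mysign : List W → W → ℤˣ
  | [], _ => 1
  | x :: L, w => (if w = x then -1 else 1) * mysign L w

lemma mysign_append (L1 L2 : List W) (w : W) :
    mysign (L1 ++ L2) w = mysign L1 w * mysign L2 w := by
  induction L1 with
  | nil => simp [mysign]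
  | cons x L ih => simp [mysign, ih, mul_assoc]

lemma mysign_eq_one_of_not_mem {L : List W} {w : W} (h : w ∉ L) : mysign L w = 1 := by
  induction L with
  | nil => rfl
  | cons x L ih =>
    rw [mem_cons, not_or] at h
    rw [mysign, if_neg h.1, ih h.2, one_mul]

include hra in
lemma titsHom_wordProd (ω : List B) (w : W) (ε : ℤˣ) :
    titsHom cs hra (cs.wordProd ω) (w, ε) =
      (cs.wordProd ω * w * (cs.wordProd ω)⁻¹, ε * mysign (cs.rightInvSeq ω) w) := by
  induction ω generalizing ε with
  | nil => simp [cs.wordProd_nil, mysign]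
  | cons i ω ih =>
    rw [cs.wordProd_cons, map_mul, Equiv.Perm.mul_apply, ih, titsHom_simple, eta_apply]
    have hris : cs.rightInvSeq (i :: ω) =
        ((cs.wordProd ω)⁻¹ * cs.simple i * cs.wordProd ω) :: cs.rightInvSeq ω := rfl
    rw [hris, mysign]
    have hcond : (cs.wordProd ω * w * (cs.wordProd ω)⁻¹ = cs.simple i) ↔
        (w = (cs.wordProd ω)⁻¹ * cs.simple i * cs.wordProd ω) := by
      constructor
      · intro e; rw [← e]; group
      · intro e; rw [e]; group
    simp only [Prod.mk.injEq]
    constructor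
    · rw [mul_inv_rev, cs.inv_simple]
      group
    · by_cases hC : cs.wordProd ω * w * (cs.wordProd ω)⁻¹ = cs.simple i
      · rw [if_pos hC, if_pos (hcond.mp hC)]
        rw [mul_comm]
        simp [mul_comm]
      · rw [if_neg hC, if_neg (fun e => hC (hcond.mpr e))]
        rw [one_mul]

include hra in
lemma mysign_invariance {ω ω' : List B} (he : cs.wordProd ω = cs.wordProd ω') (x : W) :
    mysign (cs.rightInvSeq ω) x = mysign (cs.rightInvSeq ω') x := by
  have h1 := titsHom_wordProd cs hra ω x 1
  have h2 := titsHom_wordProd cs hra ω' x 1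
  rw [he] at h1
  have h3 := h1.symm.trans h2
  have h4 := congrArg Prod.snd h3
  simpa using h4

include hra in
lemma mem_ris_of_descent {ω : List B} (hω : cs.IsReduced ω) (j : B)
    (hl : cs.length (cs.wordProd ω * cs.simple j) < cs.length (cs.wordProd ω)) :
    cs.simple j ∈ cs.rightInvSeq ω := by
  obtain ⟨ν, hν, hπ⟩ := cs.exists_reduced_word (cs.wordProd ω * cs.simple j)
  have hπσ : cs.wordProd (ν.concat j) = cs.wordProd ω := by
    rw [cs.wordProd_concat, ← hπ, cs.simple_mul_simple_cancel_right]
  have hlω : cs.length (cs.wordProd ω) = ω.length := hω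
  have hlen : (ν.concat j).length = ω.length := by
    rcases cs.length_mul_simple (cs.wordProd ω) j with h | h
    · omega
    · simp only [List.length_concat]
      have := hν.eq; rw [← hπ] at this
      omega
  have hσred : cs.IsReduced (ν.concat j) := by
    unfold CoxeterSystem.IsReduced
    rw [hπσ, hlω, hlen]
  have hsign := mysign_invariance cs hra hπσ (cs.simple j)
  have hnd := hσred.nodup_rightInvSeq
  rw [cs.rightInvSeq_concat, List.concat_eq_append] at hnd
  have hnm : cs.simple j ∉ List.map (⇑(MulAut.conj (cs.simple j))) (cs.rightInvSeq ν) := by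
    intro hm
    have hdisj := (List.nodup_append'.mp hnd).2.2
    exact hdisj hm (List.mem_singleton_self _)
  have hval : mysign (cs.rightInvSeq (ν.concat j)) (cs.simple j) = -1 := by
    rw [cs.rightInvSeq_concat, List.concat_eq_append, mysign_append,
      mysign_eq_one_of_not_mem hnm, one_mul, mysign, if_pos rfl, mysign]
    simp
  rw [hval] at hsign
  by_contra hnotmem
  rw [mysign_eq_one_of_not_mem hnotmem] at hsign
  exact absurd hsign (by decide)

include hra in
lemma exchange_left {ω : List B} (hω : cs.IsReduced ω) (j : B)
    (hl : cs.length (cs.simple j * cs.wordProd ω) < cs.length (cs.wordProd ω)) :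
    ∃ k < ω.length, cs.simple j * cs.wordProd ω = cs.wordProd (ω.eraseIdx k) := by
  have hrev : cs.IsReduced ω.reverse := (cs.isReduced_reverse_iff ω).mpr hω
  have hl' : cs.length (cs.wordProd ω.reverse * cs.simple j) <
      cs.length (cs.wordProd ω.reverse) := by
    rw [cs.wordProd_reverse]
    have he : (cs.wordProd ω)⁻¹ * cs.simple j = (cs.simple j * cs.wordProd ω)⁻¹ := by
      rw [mul_inv_rev, cs.inv_simple]
    rw [he, cs.length_inv, cs.length_inv]
    exact hl
  have hmem := mem_ris_of_descent cs hra hrev j hl'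
  rw [cs.rightInvSeq_reverse, List.mem_reverse] at hmem
  obtain ⟨k, hk, hget⟩ := List.mem_iff_getElem.mp hmem
  rw [cs.length_leftInvSeq] at hk
  refine ⟨k, hk, ?_⟩
  have hgetD := cs.getD_leftInvSeq_mul_wordProd ω k
  rw [List.getD_eq_getElem _ 1 (by rw [cs.length_leftInvSeq]; exact hk)] at hgetD
  rw [← hget]
  exact hgetD

end Exchange

/-- the two generating reflections of the infinite dihedral group, as permutations of ℤ -/
def TT : Equiv.Perm ℤ := Function.Involutive.toPerm (fun x => -x) (fun x => by ring)
def UU : Equiv.Perm ℤ := Function.Involutive.toPerm (fun x => 1 - x) (fun x => by ring)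

lemma TT_apply (x : ℤ) : TT x = -x := rfl
lemma UU_apply (x : ℤ) : UU x = 1 - x := rfl

lemma TT_mul_self : TT * TT = 1 := by
  refine Equiv.ext fun x => ?_
  simp [Equiv.Perm.mul_apply, TT_apply]

lemma UU_mul_self : UU * UU = 1 := by
  refine Equiv.ext fun x => ?_
  simp only [Equiv.Perm.mul_apply, UU_apply, Equiv.Perm.one_apply]
  ring

def qF (a b : B) : B → Equiv.Perm ℤ := fun i => if i = a then TT else if i = b then UU else 1

lemma qF_liftable (hra : ∀ s t : B, s ≠ t → M s t = 2 ∨ M s t = 0) (a b : B)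
    (hab : a ≠ b) (hMab : M a b = 0) : M.IsLiftable (qF a b) := by
  have hsq : ∀ i : B, qF a b i * qF a b i = 1 := by
    intro i
    unfold qF
    split_ifs
    · exact TT_mul_self
    · exact UU_mul_self
    · exact one_mul 1
  intro i j
  rcases eq_or_ne i j with rfl | hij
  · rw [M.diagonal, pow_one]; exact hsq i
  · rcases hra i j hij with h2 | h0
    swap
    · rw [h0, pow_zero]
    rw [h2, pow_two]
    by_cases hia : i = a
    · by_cases hjb : j = b
      · exfalso; rw [hia, hjb] at h2; rw [hMab] at h2; exact absurd h2 (by decide)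
      ·
        have hja : j ≠ a := fun e => hij (by rw [hia, e])
        have : qF a b j = 1 := by unfold qF; rw [if_neg hja, if_neg hjb]
        rw [this, mul_one]
        exact hsq i
    · by_cases hib : i = b
      · by_cases hja : j = a
        · exfalso
          rw [hib, hja] at h2
          rw [M.symmetric, hMab] at h2
          exact absurd h2 (by decide)
        · have hjb : j ≠ b := fun e => hij (by rw [hib, e])
          have : qF a b j = 1 := by unfold qF; rw [if_neg hja, if_neg hjb]
          rw [this, mul_one]
          exact hsq i
      · have : qF a b i = 1 := by unfold qF; rw [if_neg hia, if_neg hib]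
        rw [this, one_mul]
        exact hsq j


lemma abs_le_succ {x y n : ℤ} (h : |y| ≤ n) (hxy : x - y = 1 ∨ x - y = -1 ∨ x = y ∨ x + y = 1 ∨ x + y = -1 ∨ x = -y) :
    |x| ≤ n + 1 := by
  rcases abs_cases x with ⟨h1, _⟩ | ⟨h1, _⟩ <;> rcases abs_cases y with ⟨h2, _⟩ | ⟨h2, _⟩ <;> omega

noncomputable def qHom (cs : CoxeterSystem M W) (hra : ∀ s t : B, s ≠ t → M s t = 2 ∨ M s t = 0)
    (a b : B) (hab : a ≠ b) (hMab : M a b = 0) : W →* Equiv.Perm ℤ :=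
  cs.lift ⟨qF a b, qF_liftable hra a b hab hMab⟩

/-- word-length norm on the infinite dihedral group, computed from evaluations at 0 and 1 -/
def Lval (g : Equiv.Perm ℤ) : ℤ := if g 1 - g 0 = 1 then |g 0 + g 1 - 1| else |g 0 + g 1|

section qbound

variable (hra : ∀ s t : B, s ≠ t → M s t = 2 ∨ M s t = 0)
  (a b : B) (hab : a ≠ b) (hMab : M a b = 0)

include hra hab hMab

lemma qHom_simple (i : B) :
    qHom cs hra a b hab hMab (cs.simple i) = if i = a then TT else if i = b then UU else 1 :=
  cs.lift_apply_simple _ i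

lemma q_bound : ∀ ω : List B,
    (qHom cs hra a b hab hMab (cs.wordProd ω) 1 - qHom cs hra a b hab hMab (cs.wordProd ω) 0 = 1 ∨
     qHom cs hra a b hab hMab (cs.wordProd ω) 1 - qHom cs hra a b hab hMab (cs.wordProd ω) 0 = -1)
    ∧ Lval (qHom cs hra a b hab hMab (cs.wordProd ω)) ≤ (ω.length : ℤ) := by
  intro ω
  induction ω with
  | nil =>
    rw [cs.wordProd_nil, map_one (qHom cs hra a b hab hMab)]
    simp only [Lval, Equiv.Perm.one_apply]
    norm_num
  | cons i ω ih =>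
    rw [cs.wordProd_cons, map_mul]
    set g := qHom cs hra a b hab hMab (cs.wordProd ω) with hg
    set F := qHom cs hra a b hab hMab (cs.simple i) with hF
    obtain ⟨ihd, ihL⟩ := ih
    have hlen : (((i :: ω).length : ℤ)) = (ω.length : ℤ) + 1 := by
      simp only [List.length_cons]; push_cast; ring
    rw [hlen]
    have hFval : F = TT ∨ F = UU ∨ F = 1 := by
      rw [hF, qHom_simple cs hra a b hab hMab i]
      split_ifs
      · left; rfl
      · right; left; rfl
      · right; right; rfl
    rcases hFval with hFv | hFv | hFv
    · have e : ∀ x : ℤ, (F * g) x = -(g x) := fun x => by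
        rw [Equiv.Perm.mul_apply, hFv, TT_apply]
      simp only [Lval, e] at ihL ⊢
      constructor
      · omega
      · split_ifs at ihL ⊢ with h1 h2 h2 <;> exact abs_le_succ ihL (by omega)
    · have e : ∀ x : ℤ, (F * g) x = 1 - (g x) := fun x => by
        rw [Equiv.Perm.mul_apply, hFv, UU_apply]
      simp only [Lval, e] at ihL ⊢
      constructor
      · omega
      · split_ifs at ihL ⊢ with h1 h2 h2 <;> exact abs_le_succ ihL (by omega)
    · have e : ∀ x : ℤ, (F * g) x = g x := fun x => by
        rw [Equiv.Perm.mul_apply, hFv, Equiv.Perm.one_apply]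
      simp only [Lval, e] at ihL ⊢
      constructor
      · omega
      · split_ifs at ihL ⊢ with h1 h2 h2 <;> omega

end qbound

def altL (x y : B) : ℕ → List B
  | 0 => []
  | n + 1 => x :: altL y x n

lemma altL_length (x y : B) (n : ℕ) : (altL x y n).length = n := by
  induction n generalizing x y with
  | zero => rfl
  | succ n ih => simp only [altL, List.length_cons, ih]

section alt

variable (hra : ∀ s t : B, s ≠ t → M s t = 2 ∨ M s t = 0)
  (a b : B) (hab : a ≠ b) (hMab : M a b = 0)

include hra hab hMab

lemma alt_val : ∀ n : ℕ,
    qHom cs hra a b hab hMab (cs.wordProd (altL a b n)) 0 = -(((n / 2 : ℕ)) : ℤ) ∧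
    qHom cs hra a b hab hMab (cs.wordProd (altL a b n)) 1 =
      (if n % 2 = 0 then 1 - (((n / 2 : ℕ)) : ℤ) else -1 - (((n / 2 : ℕ)) : ℤ)) ∧
    qHom cs hra a b hab hMab (cs.wordProd (altL b a n)) 0 =
      (if n % 2 = 0 then (((n / 2 : ℕ)) : ℤ) else (((n / 2 : ℕ)) : ℤ) + 1) ∧
    qHom cs hra a b hab hMab (cs.wordProd (altL b a n)) 1 =
      (if n % 2 = 0 then (((n / 2 : ℕ)) : ℤ) + 1 else (((n / 2 : ℕ)) : ℤ)) := by
  intro n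
  induction n with
  | zero =>
    simp only [altL, cs.wordProd_nil, map_one (qHom cs hra a b hab hMab),
      Equiv.Perm.one_apply]
    norm_num
  | succ n ih =>
    obtain ⟨P0, P1, Q0, Q1⟩ := ih
    have hTa : qHom cs hra a b hab hMab (cs.simple a) = TT := by
      rw [qHom_simple cs hra a b hab hMab a, if_pos rfl]
    have hUb : qHom cs hra a b hab hMab (cs.simple b) = UU := by
      rw [qHom_simple cs hra a b hab hMab b, if_neg (Ne.symm hab), if_pos rfl]
    have e1 : altL a b (n + 1) = a :: altL b a n := rfl
    have e2 : altL b a (n + 1) = b :: altL a b n := rfl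
    rw [e1, e2, cs.wordProd_cons, cs.wordProd_cons, map_mul, map_mul, hTa, hUb]
    have eT : ∀ x : ℤ, (TT * qHom cs hra a b hab hMab (cs.wordProd (altL b a n))) x =
        -(qHom cs hra a b hab hMab (cs.wordProd (altL b a n)) x) := fun x =>
      Equiv.Perm.mul_apply _ _ _
    have eU : ∀ x : ℤ, (UU * qHom cs hra a b hab hMab (cs.wordProd (altL a b n))) x =
        1 - (qHom cs hra a b hab hMab (cs.wordProd (altL a b n)) x) := fun x =>
      Equiv.Perm.mul_apply _ _ _
    rw [eT 0, eT 1, eU 0, eU 1, P0, P1, Q0, Q1]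
    split_ifs <;> refine ⟨by omega, by omega, by omega, by omega⟩

lemma alt_L (n : ℕ) :
    Lval (qHom cs hra a b hab hMab (cs.wordProd (altL a b n))) = n ∧
    Lval (qHom cs hra a b hab hMab (cs.wordProd (altL b a n))) = n := by
  obtain ⟨P0, P1, Q0, Q1⟩ := alt_val cs hra a b hab hMab n
  simp only [Lval, P0, P1, Q0, Q1]
  have hn : (0 : ℤ) ≤ (n : ℤ) := by positivity
  constructor
  · split_ifs <;> first
      | (rw [abs_eq hn]; omega)
      | omega
  · split_ifs <;> first
      | (rw [abs_eq hn]; omega)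
      | omega

end alt

section main

variable (hra : ∀ s t : B, s ≠ t → M s t = 2 ∨ M s t = 0)

include hra in
lemma no_two_descents (a b : B) (hab : a ≠ b) (hMab : M a b = 0) (v : W)
    (hA : cs.length (cs.simple a * v) < cs.length v)
    (hB : cs.length (cs.simple b * v) < cs.length v) : False := by
  have claim : ∀ k : ℕ, ∃ x y ρ, ((x = a ∧ y = b) ∨ (x = b ∧ y = a)) ∧
      cs.IsReduced (altL x y k ++ ρ) ∧ cs.wordProd (altL x y k ++ ρ) = v := by
    intro k
    induction k with
    | zero =>
      obtain ⟨ρ, hρred, hρ⟩ := cs.exists_reduced_word' v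
      exact ⟨a, b, ρ, Or.inl ⟨rfl, rfl⟩, by simpa [altL] using hρred, by simpa [altL] using hρ.symm⟩
    | succ k ih =>
      obtain ⟨x, y, ρ, hxy, hred, hπ⟩ := ih
      set σ := altL x y k ++ ρ with hσ
      have hydes : cs.length (cs.simple y * cs.wordProd σ) < cs.length (cs.wordProd σ) := by
        rw [hπ]
        rcases hxy with ⟨_, rfl⟩ | ⟨_, rfl⟩
        · exact hB
        · exact hA
      obtain ⟨p, hp, he⟩ := exchange_left cs hra hred y hydes
      by_cases hcase : p < k
      · exfalso
        have hlt : p < (altL x y k).length := by rw [altL_length]; exact hcase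
        rw [hσ, List.eraseIdx_append_of_lt_length hlt] at he
        have hkey : cs.simple y * cs.wordProd (altL x y k) =
            cs.wordProd ((altL x y k).eraseIdx p) := by
          have he2 := he
          rw [cs.wordProd_append, cs.wordProd_append, ← mul_assoc] at he2
          exact mul_right_cancel he2
        have hkey2 : cs.wordProd (altL y x (k + 1)) = cs.wordProd ((altL x y k).eraseIdx p) := by
          rw [show altL y x (k + 1) = y :: altL x y k from rfl, cs.wordProd_cons, hkey]
        -- lengths via Lval
        have hL1 : Lval (qHom cs hra a b hab hMab (cs.wordProd (altL y x (k + 1)))) = (k + 1 : ℕ) := by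
          rcases hxy with ⟨hx, hy⟩ | ⟨hx, hy⟩
          · rw [hy, hx]; exact (alt_L cs hra a b hab hMab (k + 1)).2
          · rw [hy, hx]; exact (alt_L cs hra a b hab hMab (k + 1)).1
        have hL2 := (q_bound cs hra a b hab hMab ((altL x y k).eraseIdx p)).2
        rw [← hkey2] at hL2
        rw [hL1] at hL2
        have hle : ((altL x y k).eraseIdx p).length + 1 = k := by
          have := List.length_eraseIdx_add_one hlt
          rw [altL_length] at this
          omega
        have hcast : (((altL x y k).eraseIdx p).length : ℤ) = (k : ℤ) - 1 := by omega
        rw [hcast] at hL2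
        push_cast at hL2
        omega
      · push_neg at hcase
        have hle : (altL x y k).length ≤ p := by rw [altL_length]; exact hcase
        rw [hσ, List.eraseIdx_append_of_length_le hle] at he
        rw [altL_length] at he
        have hρlen : p - k < ρ.length := by
          have hplen : p < σ.length := hp
          rw [hσ, List.length_append, altL_length] at hplen
          omega
        refine ⟨y, x, ρ.eraseIdx (p - k), ?_, ?_, ?_⟩
        · rcases hxy with ⟨h1, h2⟩ | ⟨h1, h2⟩
          · right; exact ⟨h2, h1⟩
          · left; exact ⟨h2, h1⟩
        · -- reduced
          have hπnew : cs.wordProd (altL y x (k + 1) ++ ρ.eraseIdx (p - k)) = v := by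
            rw [show altL y x (k + 1) = y :: altL x y k from rfl]
            rw [show (y :: altL x y k) ++ ρ.eraseIdx (p - k) =
              y :: (altL x y k ++ ρ.eraseIdx (p - k)) from rfl]
            rw [cs.wordProd_cons, ← he, ← mul_assoc, cs.simple_mul_simple_self, one_mul, hπ]
          unfold CoxeterSystem.IsReduced
          rw [hπnew]
          have hlv : cs.length v = σ.length := by rw [← hπ]; exact hred
          rw [hlv, hσ, List.length_append, List.length_append, altL_length, altL_length]
          have := List.length_eraseIdx_add_one hρlen
          omega
        · rw [show altL y x (k + 1) = y :: altL x y k from rfl]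
          rw [show (y :: altL x y k) ++ ρ.eraseIdx (p - k) =
            y :: (altL x y k ++ ρ.eraseIdx (p - k)) from rfl]
          rw [cs.wordProd_cons, ← he, ← mul_assoc, cs.simple_mul_simple_self, one_mul, hπ]
  obtain ⟨x, y, ρ, hxy, hred, hπ⟩ := claim (cs.length v + 1)
  have h1 : cs.length v = (altL x y (cs.length v + 1) ++ ρ).length := by
    rw [← hred, hπ]
  rw [List.length_append, altL_length] at h1
  omega

end main


lemma commute_letters (hra : ∀ s t : B, s ≠ t → M s t = 2 ∨ M s t = 0) (t : B) :
    ∀ ω : List B, cs.IsReduced (t :: ω) →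
    cs.simple t * cs.wordProd ω = cs.wordProd ω * cs.simple t →
    ∀ u ∈ ω, cs.simple t * cs.simple u = cs.simple u * cs.simple t := by
  intro ω
  induction ω with
  | nil => intro _ _ u hu; exact absurd hu List.not_mem_nil
  | cons u ω' ih =>
    intro hred' hcomm u' hu'
    by_cases hc : cs.simple t * cs.simple u = cs.simple u * cs.simple t
    · rcases List.mem_cons.mp hu' with rfl | hmem
      · exact hc
      · have hlen2 : cs.length (cs.wordProd (t :: u :: ω')) = ω'.length + 2 := by
          have := hred'
          unfold CoxeterSystem.IsReduced at this
          simpa using this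
        have hx : cs.simple u * cs.wordProd (t :: u :: ω') = cs.simple t * cs.wordProd ω' := by
          rw [cs.wordProd_cons, cs.wordProd_cons, ← mul_assoc, ← hc, mul_assoc,
            cs.simple_mul_simple_cancel_left]
        have hnewred : cs.IsReduced (t :: ω') := by
          unfold CoxeterSystem.IsReduced
          have hup := cs.length_wordProd_le (t :: ω')
          have heq : cs.wordProd (t :: ω') = cs.simple u * cs.wordProd (t :: u :: ω') := by
            rw [hx, cs.wordProd_cons]
          have hcases := cs.length_simple_mul (cs.wordProd (t :: u :: ω')) u
          rw [← heq, hlen2] at hcases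
          simp only [List.length_cons] at hup ⊢
          rcases hcases with h' | h' <;> omega
        have hnewcomm : cs.simple t * cs.wordProd ω' = cs.wordProd ω' * cs.simple t := by
          have h2 := hcomm
          rw [cs.wordProd_cons, ← mul_assoc, hc, mul_assoc, mul_assoc] at h2
          exact mul_left_cancel h2
        exact ih hnewred hnewcomm u' hmem
    · exfalso
      have htu : t ≠ u := fun e => hc (by rw [e])
      have hM : M t u = 0 := by
        rcases hra t u htu with h2 | h0
        · exfalso
          apply hc
          have hpow := cs.simple_mul_simple_pow t u
          rw [h2, pow_two] at hpow
          have h3 : cs.simple t * cs.simple u = (cs.simple t * cs.simple u)⁻¹ :=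
            eq_inv_of_mul_eq_one_left hpow
          rw [h3, mul_inv_rev, cs.inv_simple, cs.inv_simple]
        · exact h0
      set v := cs.simple t * cs.wordProd (u :: ω') with hv
      have hlenv : cs.length v = ω'.length + 2 := by
        have := hred'
        unfold CoxeterSystem.IsReduced at this
        rw [cs.wordProd_cons] at this
        simpa [← hv] using this
      have hA : cs.length (cs.simple t * v) < cs.length v := by
        have he : cs.simple t * v = cs.wordProd (u :: ω') := by
          rw [hv, cs.simple_mul_simple_cancel_left]
        rw [he, hlenv]
        have hle := cs.length_wordProd_le (u :: ω')
        simp only [List.length_cons] at hle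
        omega
      have hB : cs.length (cs.simple u * v) < cs.length v := by
        have h6 : cs.simple u * v = cs.wordProd ω' * cs.simple t := by
          rw [hcomm, ← mul_assoc, cs.wordProd_cons, cs.simple_mul_simple_cancel_left]
        rw [h6, hlenv]
        have hle1 := cs.length_mul_le (cs.wordProd ω') (cs.simple t)
        have hle2 := cs.length_wordProd_le ω'
        have hle3 := cs.length_simple t
        omega
      exact no_two_descents cs hra t u htu hM v hA hB

end RACProof

/-- Let `(W,S)` be a right-angled Coxeter system, let `w ∈ W` with reduced
representation `w = s₁ ⋯ s_l`, and let `t, t' ∈ S`. If the representation `t s₁ ⋯ s_l` of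
`tw` is reduced and `t w t' = w`, then `t = t'` and `t sᵢ = sᵢ t` for each `i ∈ {1, …, l}`. -/
theorem right_angled_reduced_conjugation {B W : Type*} [Finite B] [Group W]
    {M : CoxeterMatrix B} (cs : CoxeterSystem M W)
    (hra : ∀ s t : B, s ≠ t → M s t = 2 ∨ M s t = 0)
    (w : W) (ω : List B) (hw : cs.wordProd ω = w) (hred : cs.IsReduced ω)
    (t t' : B) (hred' : cs.IsReduced (t :: ω))
    (h : cs.simple t * w * cs.simple t' = w) :
    t = t' ∧ ∀ i ∈ ω, cs.simple t * cs.simple i = cs.simple i * cs.simple t := by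
  letI := Classical.decEq B
  letI := Classical.decEq W
  subst hw
  have htt' : t = t' := RACProof.eq_of_conj_eq cs hra h
  subst htt'
  refine ⟨rfl, ?_⟩
  have hcomm : cs.simple t * cs.wordProd ω = cs.wordProd ω * cs.simple t := by
    have h2 := congrArg (fun z => z * cs.simple t) h
    rw [cs.simple_mul_simple_cancel_right] at h2
    exact h2
  intro i hi
  exact RACProof.commute_letters cs hra t ω hred' hcomm i hi
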